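/- For every erasure probability ε ∈ [0,1), the function f_ε(p) = H_b(p)/(p + 1/(1-ε)) is concave on the interval [0,1]. -/

import Mathlib

/-- Binary entropy function (base 2), with the convention `0 * log 0 = 0`
(automatic since `Real.logb 2 0 = 0`). -/
noncomputable def Hb (p : ℝ) : ℝ := -p * Real.logb 2 p - (1 - p) * Real.logb 2 (1 - p)

namespace CapacityAux

open Real Set

noncomputable def H1 (p : ℝ) : ℝ := (Real.log (1 - p) - Real.log p) / Real.log 2

noncomputable def H2 (p : ℝ) : ℝ := -(1 / (Real.log 2 * (p * (1 - p))))

noncomputable def H3 (p : ℝ) : ℝ := (1 - 2 * p) / (Real.log 2 * (p * (1 - p)) ^ 2)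

noncomputable def G (c p : ℝ) : ℝ :=
  H2 p * (p + c) ^ 2 - 2 * (H1 p * (p + c)) + 2 * Hb p

noncomputable def F1 (c p : ℝ) : ℝ := H1 p / (p + c) - Hb p / (p + c) ^ 2

lemma L_pos : (0 : ℝ) < Real.log 2 := Real.log_pos (by norm_num)

lemma Hb_eq (p : ℝ) :
    Hb p = (-(p * Real.log p) - (1 - p) * Real.log (1 - p)) / Real.log 2 := by
  simp only [Hb, Real.logb]
  ring

lemma continuous_Hb : Continuous Hb := by
  have h : Hb = fun p => (Real.negMulLog p + Real.negMulLog (1 - p)) / Real.log 2 := by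
    funext p
    rw [Hb_eq]
    simp only [Real.negMulLog]
    ring
  rw [h]
  exact ((Real.continuous_negMulLog.add
    (Real.continuous_negMulLog.comp (continuous_const.sub continuous_id))).div_const _)

lemma hasDerivAt_Hb {p : ℝ} (h0 : 0 < p) (h1 : p < 1) :
    HasDerivAt Hb (H1 p) p := by
  have heq : Hb = fun p => (-(p * Real.log p) - (1 - p) * Real.log (1 - p)) / Real.log 2 := by
    funext q; exact Hb_eq q
  rw [heq]
  have h1p : (0 : ℝ) < 1 - p := by linarith
  have hd1 : HasDerivAt (fun q : ℝ => q * Real.log q) (Real.log p + 1) p := by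
    have := (hasDerivAt_id p).fun_mul (Real.hasDerivAt_log h0.ne')
    refine this.congr_deriv (Eq.symm ?_)
    field_simp
    simp only [id_eq]; ring
  have hd2 : HasDerivAt (fun q : ℝ => (1 - q) * Real.log (1 - q))
      (-(Real.log (1 - p) + 1)) p := by
    have hinner : HasDerivAt (fun q : ℝ => 1 - q) (-1) p := by
      simpa using (hasDerivAt_const p (1:ℝ)).fun_sub (hasDerivAt_id p)
    have houter : HasDerivAt (fun y : ℝ => y * Real.log y) (Real.log (1 - p) + 1) (1 - p) := by
      have := (hasDerivAt_id (1 - p)).fun_mul (Real.hasDerivAt_log h1p.ne')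
      refine this.congr_deriv (Eq.symm ?_)
      field_simp
      simp only [id_eq]; ring
    have := houter.comp p hinner
    refine this.congr_deriv (Eq.symm ?_)
    ring
  have := ((hd1.fun_neg).fun_sub hd2).div_const (Real.log 2)
  refine this.congr_deriv (Eq.symm ?_)
  simp only [H1]
  ring

lemma hasDerivAt_H1 {p : ℝ} (h0 : 0 < p) (h1 : p < 1) :
    HasDerivAt H1 (H2 p) p := by
  have h1p : (0 : ℝ) < 1 - p := by linarith
  have hd1 : HasDerivAt (fun q : ℝ => Real.log (1 - q)) (-(1 - p)⁻¹) p := by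
    have hinner : HasDerivAt (fun q : ℝ => 1 - q) (-1) p := by
      simpa using (hasDerivAt_const p (1:ℝ)).fun_sub (hasDerivAt_id p)
    have := (Real.hasDerivAt_log h1p.ne').comp p hinner
    refine this.congr_deriv (Eq.symm ?_)
    ring
  have hd2 : HasDerivAt (fun q : ℝ => Real.log q) p⁻¹ p := Real.hasDerivAt_log h0.ne'
  have := (hd1.fun_sub hd2).div_const (Real.log 2)
  refine this.congr_deriv (Eq.symm ?_)
  simp only [H2]
  field_simp
  ring

lemma hasDerivAt_H2 {p : ℝ} (h0 : 0 < p) (h1 : p < 1) :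
    HasDerivAt H2 (H3 p) p := by
  have h1p : (0 : ℝ) < 1 - p := by linarith
  have hden : Real.log 2 * (p * (1 - p)) ≠ 0 := by positivity
  have hd : HasDerivAt (fun q : ℝ => Real.log 2 * (q * (1 - q)))
      (Real.log 2 * (1 - 2 * p)) p := by
    have : HasDerivAt (fun q : ℝ => q * (1 - q)) (1 - 2 * p) p := by
      have hinner : HasDerivAt (fun q : ℝ => 1 - q) (-1) p := by
        simpa using (hasDerivAt_const p (1:ℝ)).fun_sub (hasDerivAt_id p)
      have := (hasDerivAt_id p).fun_mul hinner
      refine this.congr_deriv (Eq.symm ?_)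
      simp; ring
    exact this.const_mul _
  have := (hd.fun_inv hden).fun_neg
  have heq : H2 = fun q : ℝ => -(Real.log 2 * (q * (1 - q)))⁻¹ := by
    funext q; simp [H2]
  rw [heq]
  refine this.congr_deriv (Eq.symm ?_)
  simp only [H3]
  have hL : Real.log 2 ≠ 0 := L_pos.ne'
  have hp' : p * (1 - p) ≠ 0 := by positivity
  field_simp

lemma hasDerivAt_F {c p : ℝ} (h0 : 0 < p) (h1 : p < 1) (hc : 0 < c) :
    HasDerivAt (fun q => Hb q / (q + c)) (F1 c p) p := by
  have ha : (0 : ℝ) < p + c := by linarith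
  have hden : HasDerivAt (fun q : ℝ => q + c) 1 p := (hasDerivAt_id p).add_const c
  have := (hasDerivAt_Hb h0 h1).fun_div hden ha.ne'
  refine this.congr_deriv (Eq.symm ?_)
  simp only [F1]
  field_simp

lemma hasDerivAt_F1 {c p : ℝ} (h0 : 0 < p) (h1 : p < 1) (hc : 0 < c) :
    HasDerivAt (F1 c) (G c p / (p + c) ^ 3) p := by
  have ha : (0 : ℝ) < p + c := by linarith
  have hden : HasDerivAt (fun q : ℝ => q + c) 1 p := (hasDerivAt_id p).add_const c
  have hden2 : HasDerivAt (fun q : ℝ => (q + c) ^ 2) (2 * (p + c)) p := by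
    have := hden.fun_pow 2
    refine this.congr_deriv (Eq.symm ?_)
    ring
  have hA := (hasDerivAt_H1 h0 h1).fun_div hden ha.ne'
  have hB := (hasDerivAt_Hb h0 h1).fun_div hden2 (by positivity : ((p : ℝ) + c) ^ 2 ≠ 0)
  have := hA.fun_sub hB
  have heq : F1 c = fun q => H1 q / (q + c) - Hb q / (q + c) ^ 2 := rfl
  rw [heq]
  refine this.congr_deriv (Eq.symm ?_)
  simp only [G]
  field_simp
  ring

lemma hasDerivAt_G {c p : ℝ} (h0 : 0 < p) (h1 : p < 1) :
    HasDerivAt (G c) (H3 p * (p + c) ^ 2) p := by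
  have hden : HasDerivAt (fun q : ℝ => q + c) 1 p := (hasDerivAt_id p).add_const c
  have hden2 : HasDerivAt (fun q : ℝ => (q + c) ^ 2) (2 * (p + c)) p := by
    have := hden.fun_pow 2
    refine this.congr_deriv (Eq.symm ?_)
    ring
  have h1' := (hasDerivAt_H2 h0 h1).fun_mul hden2
  have h2' := (((hasDerivAt_H1 h0 h1).fun_mul hden).const_mul 2)
  have h3' := (hasDerivAt_Hb h0 h1).const_mul 2
  have := (h1'.fun_sub h2').fun_add h3'
  have heq : G c = fun q => H2 q * (q + c) ^ 2 - 2 * (H1 q * (q + c)) + 2 * Hb q := rfl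
  rw [heq]
  refine this.congr_deriv (Eq.symm ?_)
  simp only [H1, H2]
  field_simp
  ring

lemma H1_half : H1 (1/2) = 0 := by
  norm_num [H1]

lemma H2_half : H2 (1/2) = -(4 / Real.log 2) := by
  norm_num [H2]
  ring

lemma Hb_half : Hb (1/2) = 1 := by
  rw [Hb_eq]
  norm_num
  have h : Real.log (1/2) = -Real.log 2 := by rw [one_div, Real.log_inv]
  rw [h]
  have hL : Real.log 2 ≠ 0 := L_pos.ne'
  field_simp
  norm_num

lemma G_half_neg {c : ℝ} (hc : 1 ≤ c) : G c (1/2) < 0 := by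
  simp only [G, H1_half, H2_half, Hb_half]
  have hL : (0 : ℝ) < Real.log 2 := L_pos
  have hL2 : Real.log 2 < 0.6931471808 := Real.log_two_lt_d9
  have hsq : (9 : ℝ)/4 ≤ (1/2 + c) ^ 2 := by nlinarith
  have h3 : (2:ℝ) < 4 / Real.log 2 * (9/4) := by
    rw [div_mul_eq_mul_div, lt_div_iff₀ hL]; nlinarith
  have h4 : 4 / Real.log 2 * (9/4) ≤ 4 / Real.log 2 * ((1/2 + c) ^ 2) :=
    mul_le_mul_of_nonneg_left hsq (by positivity)
  nlinarith [h3, h4]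

lemma G_neg {c p : ℝ} (hc : 1 ≤ c) (h0 : 0 < p) (h1 : p < 1) : G c p < 0 := by
  have hc0 : (0 : ℝ) < c := by linarith
  have hcont : ∀ q ∈ Ioo (0:ℝ) 1, ContinuousAt (G c) q := fun q hq =>
    (hasDerivAt_G (c := c) hq.1 hq.2).continuousAt
  have hderiv : ∀ q ∈ Ioo (0:ℝ) 1, deriv (G c) q = H3 q * (q + c) ^ 2 := fun q hq =>
    (hasDerivAt_G hq.1 hq.2).deriv
  rcases lt_trichotomy p (1/2) with hp | hp | hp
  · -- G strictly mono on Ioc 0 (1/2)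
    have hmono : StrictMonoOn (G c) (Ioc (0:ℝ) (1/2)) := by
      apply strictMonoOn_of_deriv_pos (convex_Ioc _ _)
      · intro q hq
        exact (hcont q ⟨hq.1, by linarith [hq.2]⟩).continuousWithinAt
      · intro q hq
        rw [interior_Ioc] at hq
        have hq1 : q < 1 := by linarith [hq.2]
        rw [hderiv q ⟨hq.1, hq1⟩]
        have hq0 : (0:ℝ) < q := hq.1
        have hq1' : (0:ℝ) < 1 - q := by linarith
        have hpos : (0:ℝ) < Real.log 2 * (q * (1 - q)) ^ 2 :=
          mul_pos L_pos (pow_pos (mul_pos hq0 hq1') 2)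
        have hH3 : (0:ℝ) < H3 q := div_pos (by linarith [hq.2]) hpos
        have haq : (0:ℝ) < q + c := by linarith
        exact mul_pos hH3 (pow_pos haq 2)
    have := hmono ⟨h0, le_of_lt hp⟩ ⟨by norm_num, le_refl _⟩ hp
    calc G c p < G c (1/2) := this
      _ < 0 := G_half_neg hc
  · rw [hp]; exact G_half_neg hc
  · have hanti : StrictAntiOn (G c) (Ico (1/2 : ℝ) 1) := by
      apply strictAntiOn_of_deriv_neg (convex_Ico _ _)
      · intro q hq
        exact (hcont q ⟨by linarith [hq.1], hq.2⟩).continuousWithinAt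
      · intro q hq
        rw [interior_Ico] at hq
        have hq0 : 0 < q := by linarith [hq.1]
        rw [hderiv q ⟨hq0, hq.2⟩]
        have hq1' : (0:ℝ) < 1 - q := by linarith [hq.2]
        have hpos : (0:ℝ) < Real.log 2 * (q * (1 - q)) ^ 2 :=
          mul_pos L_pos (pow_pos (mul_pos hq0 hq1') 2)
        have hH3 : H3 q < 0 := div_neg_of_neg_of_pos (by linarith [hq.1]) hpos
        have haq : (0:ℝ) < q + c := by linarith
        exact mul_neg_of_neg_of_pos hH3 (pow_pos haq 2)
    have := hanti ⟨le_refl _, by norm_num⟩ ⟨le_of_lt hp, h1⟩ hp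
    calc G c p < G c (1/2) := this
      _ < 0 := G_half_neg hc

end CapacityAux

/-- For every erasure probability ε ∈ [0,1), the function
`f_ε(p) = H_b(p)/(p + 1/(1-ε))` is concave on [0,1]. -/
theorem concavity_of_capacity_objective (ε : ℝ) (hε0 : 0 ≤ ε) (hε1 : ε < 1) :
    ConcaveOn ℝ (Set.Icc (0 : ℝ) 1) (fun p => Hb p / (p + 1 / (1 - ε))) := by
  open CapacityAux in
  set c : ℝ := 1 / (1 - ε) with hcdef
  have h1ε : (0:ℝ) < 1 - ε := by linarith
  have hc1 : 1 ≤ c := by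
    rw [hcdef, le_div_iff₀ h1ε]; linarith
  have hc0 : (0:ℝ) < c := by linarith
  have hint : interior (Set.Icc (0:ℝ) 1) = Set.Ioo 0 1 := interior_Icc
  apply concaveOn_of_hasDerivWithinAt2_nonpos (f' := CapacityAux.F1 c)
    (f'' := fun p => CapacityAux.G c p / (p + c) ^ 3) (convex_Icc 0 1)
  · apply ContinuousOn.div (CapacityAux.continuous_Hb.continuousOn)
      ((continuous_id.add continuous_const).continuousOn)
    intro x hx
    have : (0:ℝ) ≤ x := hx.1
    apply ne_of_gt; change 0 < x + c; linarith
  · intro x hx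
    rw [hint] at hx
    exact (CapacityAux.hasDerivAt_F hx.1 hx.2 hc0).hasDerivWithinAt
  · intro x hx
    rw [hint] at hx
    exact (CapacityAux.hasDerivAt_F1 hx.1 hx.2 hc0).hasDerivWithinAt
  · intro x hx
    rw [hint] at hx
    have hG := CapacityAux.G_neg hc1 hx.1 hx.2
    have ha : (0:ℝ) < x + c := by linarith [hx.1]
    have : (0:ℝ) < (x + c) ^ 3 := by positivity
    exact le_of_lt (div_neg_of_neg_of_pos hG this)
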